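/- Let g : K → L be a continuous surjection of compact Hausdorff spaces. Then for each regular Borel probability measure ν on L there exists a regular Borel probability measure μ on K such that g[μ] = ν and the family {g⁻¹(B) : B ∈ Bor(L)} is Δ-dense in Bor(K) with respect to μ, i.e., for every ε > 0 and every Borel A ⊆ K there is a Borel B ⊆ L with μ(A Δ g⁻¹(B)) < ε. -/

import Mathlib

open MeasureTheory

open Set
open scoped ENNReal symmDiff
set_option linter.unusedSectionVars false
set_option linter.unusedVariables false

namespace Stmt10Aux

variable {K L : Type*}
    [TopologicalSpace K] [CompactSpace K] [T2Space K] [MeasurableSpace K] [BorelSpace K]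
    [TopologicalSpace L] [CompactSpace L] [T2Space L] [MeasurableSpace L] [BorelSpace L]

/-- A partial solution: a σ-algebra `sa` on `K` containing all `g`-preimages of Borel
sets of `L`, together with a measure on it lifting `ν`, such that preimages are dense
in `sa` and every `sa`-set has a compact "sandwich" approximation from inside. -/
structure Elem (g : K → L) (ν : Measure L) where
  sa : MeasurableSpace K
  mu : @Measure K sa
  comap_le : MeasurableSpace.comap g ‹MeasurableSpace L› ≤ sa
  lift : ∀ B : Set L, MeasurableSet B → mu (g ⁻¹' B) = ν B
  dense : ∀ A : Set K, MeasurableSet[sa] A → ∀ ε : ℝ≥0∞, 0 < ε →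
      ∃ B : Set L, MeasurableSet B ∧ mu (symmDiff A (g ⁻¹' B)) < ε
  sand : ∀ A : Set K, MeasurableSet[sa] A → ∀ ε : ℝ≥0∞, 0 < ε →
      ∃ F A' : Set K, IsCompact F ∧ MeasurableSet[sa] A' ∧ A' ⊆ F ∧ F ⊆ A ∧
        mu A ≤ mu A' + ε

variable {g : K → L} {ν : Measure L}

/-- The extension order on partial solutions. -/
def Elem.le (e f : Elem g ν) : Prop :=
  e.sa ≤ f.sa ∧ ∀ A : Set K, MeasurableSet[e.sa] A → f.mu A = e.mu A

theorem Elem.le_rfl' (e : Elem g ν) : e.le e := ⟨le_rfl, fun _ _ => rfl⟩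

theorem Elem.le_comp {e f h : Elem g ν} (h1 : e.le f) (h2 : f.le h) : e.le h :=
  ⟨h1.1.trans h2.1, fun A hA => (h2.2 A (h1.1 _ hA)).trans (h1.2 A hA)⟩

theorem Elem.mu_univ [IsProbabilityMeasure ν] (e : Elem g ν) : e.mu univ = 1 := by
  have := e.lift univ MeasurableSet.univ
  simpa using this

theorem Elem.mu_le_one [IsProbabilityMeasure ν] (e : Elem g ν) (A : Set K) :
    e.mu A ≤ 1 := by
  rw [← e.mu_univ]; exact measure_mono (subset_univ A)

theorem Elem.mu_ne_top [IsProbabilityMeasure ν] (e : Elem g ν) (A : Set K) :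
    e.mu A ≠ ⊤ := by
  exact ne_top_of_le_ne_top ENNReal.one_ne_top (e.mu_le_one A)

/-- preimages of compact sets are compact -/
theorem preimage_compact' {K' L' : Type*} [TopologicalSpace K'] [CompactSpace K']
    [TopologicalSpace L'] [T2Space L'] {g : K' → L'} (hg : Continuous g) {C : Set L'}
    (hC : IsCompact C) : IsCompact (g ⁻¹' C) :=
  (hC.isClosed.preimage hg).isCompact

/-- The base partial solution, supported on the σ-algebra of preimages. -/
noncomputable def baseElem (hgc : Continuous g) (hg : Function.Surjective g)
    (ν : Measure L) [IsProbabilityMeasure ν] [ν.Regular] : Elem g ν := by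
  classical
  set G : MeasurableSpace K := MeasurableSpace.comap g ‹MeasurableSpace L› with hG
  set s : L → K := Function.surjInv hg with hs
  have hgs : ∀ l, g (s l) = l := fun l => Function.surjInv_eq hg l
  letI : MeasurableSpace K := G
  have hsm : Measurable s := by
    intro A hA
    obtain ⟨B, hB, rfl⟩ := hA
    have : s ⁻¹' (g ⁻¹' B) = B := by
      ext l; simp [hgs l]
    rw [this]; exact hB
  have hmap : ∀ {B' : Set L}, MeasurableSet B' → (ν.map s) (g ⁻¹' B') = ν B' := by
    intro B' hB'
    rw [Measure.map_apply hsm ⟨B', hB', rfl⟩]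
    congr 1; ext l; simp [hgs l]
  refine ⟨G, ν.map s, le_rfl, fun B hB => hmap hB, ?_, ?_⟩
  · intro A hA ε hε
    obtain ⟨B, hB, rfl⟩ := hA
    exact ⟨B, hB, by simpa [symmDiff_self] using hε⟩
  · intro A hA ε hε
    obtain ⟨B, hB, rfl⟩ := hA
    obtain ⟨C, hCB, hCc, hlt⟩ := hB.exists_isCompact_lt_add (measure_ne_top ν B) hε.ne'
    have hCm : MeasurableSet C := hCc.isClosed.measurableSet
    have hFm : MeasurableSet[G] (g ⁻¹' C) := ⟨C, hCm, rfl⟩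
    refine ⟨g ⁻¹' C, g ⁻¹' C, preimage_compact' hgc hCc, hFm, subset_rfl,
      preimage_mono hCB, ?_⟩
    rw [hmap hB, hmap hCm]
    exact hlt.le

section Chain

variable [IsProbabilityMeasure ν]

theorem chain_pair {c : Set (Elem g ν)} (hc : IsChain Elem.le c)
    {a b : Elem g ν} (ha : a ∈ c) (hb : b ∈ c) :
    ∃ d ∈ c, a.le d ∧ b.le d := by
  rcases eq_or_ne a b with rfl | hne
  · exact ⟨a, ha, a.le_rfl', a.le_rfl'⟩
  rcases hc ha hb hne with h | h
  · exact ⟨b, hb, h, b.le_rfl'⟩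
  · exact ⟨a, ha, a.le_rfl', h⟩

theorem chain_finUB {c : Set (Elem g ν)} (hc : IsChain Elem.le c)
    (u : ℕ → Elem g ν) (hu : ∀ k, u k ∈ c) {e : Elem g ν} (he : e ∈ c) (n : ℕ) :
    ∃ f ∈ c, e.le f ∧ ∀ k ≤ n, (u k).le f := by
  induction n with
  | zero =>
    obtain ⟨d, hd, h1, h2⟩ := chain_pair hc he (hu 0)
    exact ⟨d, hd, h1, fun k hk => by simpa [Nat.le_zero.1 hk] using h2⟩
  | succ n ih =>
    obtain ⟨f, hf, hef, hkf⟩ := ih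
    obtain ⟨d, hd, h1, h2⟩ := chain_pair hc hf (hu (n + 1))
    refine ⟨d, hd, Elem.le_comp hef h1, fun k hk => ?_⟩
    rcases Nat.le_succ_iff.1 hk with hk' | hk'
    · exact Elem.le_comp (hkf k hk') h1
    · simpa [hk'] using h2

/-- The natural "cover from the chain" premeasure. -/
noncomputable def chainFn (c : Set (Elem g ν)) : Set K → ℝ≥0∞ :=
  fun E => sInf {r | ∃ e ∈ c, ∃ A, MeasurableSet[e.sa] A ∧ E ⊆ A ∧ r = e.mu A}

theorem chainFn_le {c : Set (Elem g ν)} {e : Elem g ν} (he : e ∈ c) {A E : Set K}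
    (hA : MeasurableSet[e.sa] A) (hEA : E ⊆ A) : chainFn c E ≤ e.mu A :=
  sInf_le ⟨e, he, A, hA, hEA, rfl⟩

theorem chainFn_empty {c : Set (Elem g ν)} (hne : c.Nonempty) : chainFn c ∅ = 0 := by
  obtain ⟨e, he⟩ := hne
  refine le_antisymm ?_ zero_le
  simpa using chainFn_le he (@MeasurableSet.empty K e.sa) (empty_subset _)

theorem chainFn_le_one {c : Set (Elem g ν)} (hne : c.Nonempty) (E : Set K) :
    chainFn c E ≤ 1 := by
  obtain ⟨e, he⟩ := hne
  calc chainFn c E ≤ e.mu univ := chainFn_le he (@MeasurableSet.univ K e.sa) (subset_univ _)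
  _ = 1 := e.mu_univ

theorem chainFn_exists {c : Set (Elem g ν)} (hne : c.Nonempty) (E : Set K)
    {δ : ℝ≥0∞} (hδ : 0 < δ) :
    ∃ e ∈ c, ∃ A, MeasurableSet[e.sa] A ∧ E ⊆ A ∧ e.mu A ≤ chainFn c E + δ := by
  have hlt : chainFn c E < chainFn c E + δ :=
    ENNReal.lt_add_right (lt_of_le_of_lt (chainFn_le_one hne E) ENNReal.one_lt_top).ne hδ.ne'
  obtain ⟨r, hr, hrlt⟩ := sInf_lt_iff.1 hlt
  obtain ⟨e, he, A, hA, hEA, rfl⟩ := hr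
  exact ⟨e, he, A, hA, hEA, hrlt.le⟩

/-- The key countable subadditivity estimate, via compact sandwiches. -/
theorem chain_key {c : Set (Elem g ν)} (hc : IsChain Elem.le c)
    {e : Elem g ν} (he : e ∈ c) {A : Set K} (hA : MeasurableSet[e.sa] A)
    (t : ℕ → Set K) (hcov : A ⊆ ⋃ n, t n) :
    e.mu A ≤ ∑' n, chainFn c (t n) := by
  have hne : c.Nonempty := ⟨e, he⟩
  refine ENNReal.le_of_forall_pos_le_add fun ε hε _ => ?_
  have hε2 : (0 : ℝ≥0∞) < (ε : ℝ≥0∞) / 2 := by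
    simp [ENNReal.div_pos_iff, hε.ne']
  obtain ⟨δ, hδpos, hδsum⟩ := ENNReal.exists_pos_sum_of_countable' hε2.ne' ℕ
  -- choose covers from the chain
  have h1 : ∀ n, ∃ e' ∈ c, ∃ A', MeasurableSet[e'.sa] A' ∧ t n ⊆ A' ∧
      e'.mu A' ≤ chainFn c (t n) + δ n := fun n => chainFn_exists hne (t n) (hδpos n)
  choose u hu Aa hAa htA hmuA using h1
  -- dominating elements
  have h2 : ∀ n, ∃ f ∈ c, e.le f ∧ ∀ k ≤ n, (u k).le f := fun n => chain_finUB hc u hu he n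
  choose fs hfs hefs hufs using h2
  -- the decreasing remainders
  set B : ℕ → Set K := fun n => A \ ⋃ k ∈ Finset.range (n + 1), Aa k with hB
  have hBmeas : ∀ n, MeasurableSet[(fs n).sa] (B n) := by
    intro n
    refine MeasurableSet.diff ((hefs n).1 _ hA) ?_
    exact MeasurableSet.biUnion (Finset.range (n + 1)).countable_toSet
      fun k hk => ((hufs n) k (Nat.lt_succ_iff.1 (Finset.mem_range.1 hk))).1 _ (hAa k)
  have hBanti : ∀ {m n : ℕ}, m ≤ n → B n ⊆ B m := by
    intro m n hmn x hx
    refine ⟨hx.1, fun hmem => hx.2 ?_⟩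
    obtain ⟨k, hk, hxk⟩ := mem_iUnion₂.1 hmem
    exact mem_iUnion₂.2 ⟨k, Finset.mem_range.2 ((Finset.mem_range.1 hk).trans_le
      (by omega)), hxk⟩
  -- compact sandwiches for the remainders
  have h3 : ∀ n, ∃ F A', IsCompact F ∧ MeasurableSet[(fs n).sa] A' ∧ A' ⊆ F ∧ F ⊆ B n ∧
      (fs n).mu (B n) ≤ (fs n).mu A' + δ n :=
    fun n => (fs n).sand (B n) (hBmeas n) (δ n) (hδpos n)
  choose Fc A' hFc hA'meas hA'F hFB hsand using h3
  -- all the compacts have empty intersection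
  have hFcInter : (⋂ n, Fc n) = ∅ := by
    rw [eq_empty_iff_forall_notMem]
    intro x hx
    have hxB : ∀ n, x ∈ B n := fun n => hFB n (mem_iInter.1 hx n)
    obtain ⟨m, hm⟩ := mem_iUnion.1 (hcov (hxB 0).1)
    exact (hxB m).2 (mem_iUnion₂.2 ⟨m, Finset.self_mem_range_succ m, htA m hm⟩)
  -- hence some finite intersection is empty
  have hGempty : ∃ N, (⋂ k ∈ Finset.range (N + 1), Fc k) = ∅ := by
    by_contra hcon
    push_neg at hcon
    set S : ℕ → Set K := fun n => ⋂ k ∈ Finset.range (n + 1), Fc k with hS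
    have hSanti : ∀ i, S (i + 1) ⊆ S i := by
      intro i
      refine biInter_subset_biInter_left ?_
      intro k hk
      exact Finset.mem_range.2 ((Finset.mem_range.1 hk).trans (Nat.lt_succ_self _))
    have hScl : ∀ i, IsClosed (S i) :=
      fun i => isClosed_biInter fun k _ => (hFc k).isClosed
    have hSco : IsCompact (S 0) := by
      refine (hFc 0).of_isClosed_subset (hScl 0) ?_
      intro x hx
      exact mem_iInter₂.1 hx 0 (Finset.self_mem_range_succ 0)
    have hSne : ∀ i, (S i).Nonempty := fun i => hcon i
    obtain ⟨x, hx⟩ := IsCompact.nonempty_iInter_of_sequence_nonempty_isCompact_isClosed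
      S hSanti hSne hSco hScl
    have : x ∈ ⋂ n, Fc n := by
      refine mem_iInter.2 fun n => ?_
      exact mem_iInter₂.1 (mem_iInter.1 hx n) n (Finset.self_mem_range_succ n)
    rw [hFcInter] at this
    exact this
  obtain ⟨N, hN⟩ := hGempty
  -- a common dominating element
  obtain ⟨f, hfc, hef, hkf⟩ := chain_finUB hc fs hfs he N
  have huf : ∀ k, k ≤ N → (u k).le f :=
    fun k hk => Elem.le_comp ((hufs N) k hk) (hkf N le_rfl)
  -- main estimate, computed in f
  have hcovN : B N ⊆ ⋃ k ∈ Finset.range (N + 1), (B k \ A' k) := by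
    intro x hx
    have hxG : x ∉ ⋂ k ∈ Finset.range (N + 1), Fc k := by rw [hN]; exact notMem_empty x
    have hex : ∃ k ∈ Finset.range (N + 1), x ∉ Fc k := by
      by_contra hcon
      push_neg at hcon
      exact hxG (mem_iInter₂.2 hcon)
    obtain ⟨k, hk, hxk⟩ := hex
    refine mem_iUnion₂.2 ⟨k, hk, hBanti (Nat.lt_succ_iff.1 (Finset.mem_range.1 hk)) hx,
      fun hxA' => hxk (hA'F k hxA')⟩
  have hdiff : ∀ k, k ≤ N → f.mu (B k \ A' k) ≤ δ k := by
    intro k hkN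
    have hm1 : MeasurableSet[(fs k).sa] (B k \ A' k) :=
      MeasurableSet.diff (hBmeas k) (hA'meas k)
    have hle : (fs k).le f := hkf k hkN
    rw [hle.2 _ hm1]
    have hsub : A' k ⊆ B k := (hA'F k).trans (hFB k)
    have hd : (fs k).mu (B k \ A' k) = (fs k).mu (B k) - (fs k).mu (A' k) :=
      measure_diff hsub (MeasurableSet.nullMeasurableSet (hA'meas k)) ((fs k).mu_ne_top _)
    rw [hd]
    exact tsub_le_iff_right.2 (by simpa [add_comm] using hsand k)
  -- collect the estimate
  have hBNmeas : MeasurableSet[f.sa] (B N) := (hkf N le_rfl).1 _ (hBmeas N)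
  have hstep1 : f.mu (B N) ≤ ∑ k ∈ Finset.range (N + 1), δ k := by
    calc f.mu (B N) ≤ f.mu (⋃ k ∈ Finset.range (N + 1), (B k \ A' k)) :=
          measure_mono hcovN
    _ ≤ ∑ k ∈ Finset.range (N + 1), f.mu (B k \ A' k) :=
          measure_biUnion_finset_le _ _
    _ ≤ ∑ k ∈ Finset.range (N + 1), δ k :=
          Finset.sum_le_sum fun k hk => hdiff k (Nat.lt_succ_iff.1 (Finset.mem_range.1 hk))
  have hstep2 : f.mu A ≤ f.mu (B N) + ∑ k ∈ Finset.range (N + 1), f.mu (Aa k) := by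
    calc f.mu A ≤ f.mu (B N ∪ ⋃ k ∈ Finset.range (N + 1), Aa k) :=
          measure_mono (fun x hx => by
            by_cases hx' : x ∈ ⋃ k ∈ Finset.range (N + 1), Aa k
            · exact Or.inr hx'
            · exact Or.inl ⟨hx, hx'⟩)
    _ ≤ f.mu (B N) + f.mu (⋃ k ∈ Finset.range (N + 1), Aa k) := measure_union_le _ _
    _ ≤ f.mu (B N) + ∑ k ∈ Finset.range (N + 1), f.mu (Aa k) := by
          exact add_le_add_right (measure_biUnion_finset_le _ _) _
  have hAak : ∀ k, k ≤ N → f.mu (Aa k) ≤ chainFn c (t k) + δ k := by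
    intro k hk
    rw [(huf k hk).2 _ (hAa k)]
    exact hmuA k
  have hfinal : e.mu A ≤ ∑' n, chainFn c (t n) + (↑ε / 2 + ↑ε / 2) := by
    rw [← hef.2 _ hA]
    calc f.mu A ≤ f.mu (B N) + ∑ k ∈ Finset.range (N + 1), f.mu (Aa k) := hstep2
    _ ≤ ∑ k ∈ Finset.range (N + 1), δ k +
          ∑ k ∈ Finset.range (N + 1), (chainFn c (t k) + δ k) := by
        refine add_le_add hstep1 (Finset.sum_le_sum fun k hk =>
          hAak k (Nat.lt_succ_iff.1 (Finset.mem_range.1 hk)))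
    _ = ∑ k ∈ Finset.range (N + 1), (chainFn c (t k) + δ k) +
          ∑ k ∈ Finset.range (N + 1), δ k := by rw [add_comm]
    _ ≤ (∑' n, chainFn c (t n) + ↑ε / 2) + ↑ε / 2 := by
        refine add_le_add ?_ ((ENNReal.sum_le_tsum _).trans hδsum.le)
        rw [Finset.sum_add_distrib]
        exact add_le_add (ENNReal.sum_le_tsum _)
          ((ENNReal.sum_le_tsum _).trans hδsum.le)
    _ = ∑' n, chainFn c (t n) + (↑ε / 2 + ↑ε / 2) := by rw [add_assoc]
  rw [ENNReal.add_halves] at hfinal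
  exact hfinal

/-- The chain outer measure. -/
noncomputable def chainOM (c : Set (Elem g ν)) (hne : c.Nonempty) : OuterMeasure K :=
  OuterMeasure.ofFunction (chainFn c) (chainFn_empty hne)

theorem chainOM_eq {c : Set (Elem g ν)} (hc : IsChain Elem.le c) (hne : c.Nonempty)
    {e : Elem g ν} (he : e ∈ c) {A : Set K} (hA : MeasurableSet[e.sa] A) :
    chainOM c hne A = e.mu A := by
  refine le_antisymm ((OuterMeasure.ofFunction_le _).trans (chainFn_le he hA subset_rfl)) ?_
  rw [chainOM, OuterMeasure.ofFunction_apply]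
  exact le_iInf₂ fun t ht => chain_key hc he hA t ht

theorem chainOM_ne_top {c : Set (Elem g ν)} (hne : c.Nonempty) (A : Set K) :
    chainOM c hne A ≠ ⊤ := by
  refine ne_top_of_le_ne_top ENNReal.one_ne_top ?_
  calc chainOM c hne A ≤ chainFn c A := OuterMeasure.ofFunction_le _
  _ ≤ 1 := chainFn_le_one hne A

theorem chain_carath {c : Set (Elem g ν)} (hc : IsChain Elem.le c) (hne : c.Nonempty)
    {e : Elem g ν} (he : e ∈ c) {A : Set K} (hA : MeasurableSet[e.sa] A) :
    MeasurableSet[(chainOM c hne).caratheodory] A := by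
  refine OuterMeasure.ofFunction_caratheodory fun s => ?_
  refine le_sInf ?_
  rintro r ⟨f, hf, C, hC, hsC, rfl⟩
  obtain ⟨d, hd, hfd, hed⟩ := chain_pair hc hf he
  calc
    chainFn c (s ∩ A) + chainFn c (s \ A)
      ≤ d.mu (C ∩ A) + d.mu (C \ A) :=
        add_le_add
          (chainFn_le hd (MeasurableSet.inter (hfd.1 _ hC) (hed.1 _ hA))
            (inter_subset_inter hsC subset_rfl))
          (chainFn_le hd (MeasurableSet.diff (hfd.1 _ hC) (hed.1 _ hA))
            (fun x hx => ⟨hsC hx.1, hx.2⟩))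
    _ = d.mu C := measure_inter_add_diff C (hed.1 _ hA)
    _ = f.mu C := hfd.2 _ hC

/-- The measure induced on the Carathéodory σ-algebra. -/
noncomputable def chainMu (c : Set (Elem g ν)) (hne : c.Nonempty) :
    @Measure K (chainOM c hne).caratheodory :=
  @OuterMeasure.toMeasure K (chainOM c hne).caratheodory (chainOM c hne) le_rfl

theorem chainMu_apply {c : Set (Elem g ν)} (hne : c.Nonempty) {A : Set K}
    (hA : MeasurableSet[(chainOM c hne).caratheodory] A) :
    chainMu c hne A = chainOM c hne A :=
  @toMeasure_apply K (chainOM c hne).caratheodory (chainOM c hne) le_rfl A hA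

theorem chainMu_eq {c : Set (Elem g ν)} (hc : IsChain Elem.le c) (hne : c.Nonempty)
    {e : Elem g ν} (he : e ∈ c) {A : Set K} (hA : MeasurableSet[e.sa] A) :
    chainMu c hne A = e.mu A := by
  rw [chainMu_apply hne (chain_carath hc hne he hA), chainOM_eq hc hne he hA]

theorem chainMu_ne_top {c : Set (Elem g ν)} (hne : c.Nonempty) (A : Set K) :
    chainMu c hne A ≠ ⊤ := by
  refine ne_top_of_le_ne_top ENNReal.one_ne_top ?_
  calc chainMu c hne A ≤ chainMu c hne univ := measure_mono (subset_univ _)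
  _ = chainOM c hne univ := chainMu_apply hne (@MeasurableSet.univ K _)
  _ ≤ chainFn c univ := OuterMeasure.ofFunction_le _
  _ ≤ 1 := chainFn_le_one hne _

/-- A countable chain cover of a Carathéodory set, with small excess measure. -/
theorem chain_approx {c : Set (Elem g ν)} (hc : IsChain Elem.le c) (hne : c.Nonempty)
    {A : Set K} (hA : MeasurableSet[(chainOM c hne).caratheodory] A)
    {ε : ℝ≥0∞} (hε : 0 < ε) :
    ∃ (u : ℕ → Elem g ν) (C : ℕ → Set K), (∀ n, u n ∈ c) ∧
      (∀ n, MeasurableSet[(u n).sa] (C n)) ∧ A ⊆ ⋃ n, C n ∧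
      ∑' n, chainMu c hne (C n) ≤ chainMu c hne A + ε := by
  have hε2 : (0 : ℝ≥0∞) < ε / 2 := ENNReal.div_pos hε.ne' (by norm_num)
  obtain ⟨δ, hδpos, hδsum⟩ := ENNReal.exists_pos_sum_of_countable' hε2.ne' ℕ
  have hlt : chainOM c hne A < chainOM c hne A + ε / 2 :=
    ENNReal.lt_add_right (chainOM_ne_top hne A) hε2.ne'
  rw [chainOM, OuterMeasure.ofFunction_apply] at hlt
  obtain ⟨t, hht⟩ := iInf_lt_iff.1 (lt_of_le_of_lt le_rfl hlt)
  obtain ⟨hcov, hsum⟩ : A ⊆ iUnion t ∧ ∑' n, chainFn c (t n) < chainOM c hne A + ε / 2 := by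
    rcases iInf_lt_iff.1 hht with ⟨hc', hlt'⟩
    exact ⟨hc', hlt'⟩
  choose u hu C hC htC hmuC using fun n => chainFn_exists hne (t n) (hδpos n)
  refine ⟨u, C, hu, hC, hcov.trans (iUnion_mono htC), ?_⟩
  rw [chainMu_apply hne hA]
  calc ∑' n, chainMu c hne (C n) = ∑' n, (u n).mu (C n) :=
        tsum_congr fun n => chainMu_eq hc hne (hu n) (hC n)
  _ ≤ ∑' n, (chainFn c (t n) + δ n) := ENNReal.tsum_le_tsum fun n => hmuC n
  _ = ∑' n, chainFn c (t n) + ∑' n, δ n := ENNReal.tsum_add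
  _ ≤ (chainOM c hne A + ε / 2) + ε / 2 := add_le_add hsum.le hδsum.le
  _ = chainOM c hne A + ε := by rw [add_assoc, ENNReal.add_halves]

/-- The upper bound of a nonempty chain. -/
noncomputable def chainUB (c : Set (Elem g ν)) (hc : IsChain Elem.le c) (hne : c.Nonempty) :
    Elem g ν where
  sa := (chainOM c hne).caratheodory
  mu := chainMu c hne
  comap_le := fun s hs =>
    chain_carath hc hne hne.choose_spec (hne.choose.comap_le _ hs)
  lift := by
    intro B hB
    rw [chainMu_eq hc hne hne.choose_spec (hne.choose.comap_le _ ⟨B, hB, rfl⟩)]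
    exact hne.choose.lift B hB
  dense := by
    intro A hA ε hε
    rcases eq_or_ne ε ⊤ with rfl | hεtop
    · exact ⟨∅, MeasurableSet.empty, (chainMu_ne_top hne _).lt_top⟩
    have hε5 : (0 : ℝ≥0∞) < ε / 5 := ENNReal.div_pos hε.ne' (by norm_num)
    have hε5top : ε / 5 ≠ ⊤ := by
      simp [ENNReal.div_eq_top, hεtop]
    obtain ⟨u, C, hu, hC, hcov, hsum⟩ := chain_approx hc hne hA hε5
    set V : Set K := ⋃ n, C n with hV
    have hCm : ∀ n, MeasurableSet[(chainOM c hne).caratheodory] (C n) :=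
      fun n => chain_carath hc hne (hu n) (hC n)
    have hVmeas : MeasurableSet[(chainOM c hne).caratheodory] V :=
      MeasurableSet.iUnion hCm
    have hVle : chainMu c hne V ≤ chainMu c hne A + ε / 5 :=
      le_trans (measure_iUnion_le _) hsum
    have hVA : chainMu c hne (V \ A) ≤ ε / 5 := by
      rw [measure_diff hcov (MeasurableSet.nullMeasurableSet hA) (chainMu_ne_top hne A)]
      exact tsub_le_iff_right.2 (by rw [add_comm]; exact hVle)
    -- tail of the series
    have htot : ∑' n, chainMu c hne (C n) ≠ ⊤ :=
      ne_top_of_le_ne_top (by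
        exact ENNReal.add_ne_top.2 ⟨chainMu_ne_top hne A, hε5top⟩) hsum
    obtain ⟨N, hN⟩ :=
      ((ENNReal.tendsto_sum_nat_add (fun n => chainMu c hne (C n)) htot).eventually
        (gt_mem_nhds hε5)).exists
    set W : Set K := ⋃ k ∈ Finset.range N, C k with hW
    have hVW : chainMu c hne (V \ W) ≤ ε / 5 := by
      have hsub : V \ W ⊆ ⋃ k, C (k + N) := by
        rintro x ⟨hxV, hxW⟩
        obtain ⟨m, hm⟩ := mem_iUnion.1 hxV
        have hmN : N ≤ m := by
          by_contra hmN
          exact hxW (mem_iUnion₂.2 ⟨m, Finset.mem_range.2 (by omega), hm⟩)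
        exact mem_iUnion.2 ⟨m - N, by rwa [Nat.sub_add_cancel hmN]⟩
      calc chainMu c hne (V \ W) ≤ chainMu c hne (⋃ k, C (k + N)) := measure_mono hsub
      _ ≤ ∑' k, chainMu c hne (C (k + N)) := measure_iUnion_le _
      _ ≤ ε / 5 := hN.le
    have hWV : W ⊆ V := by
      intro x hx
      obtain ⟨k, _, hk⟩ := mem_iUnion₂.1 hx
      exact mem_iUnion.2 ⟨k, hk⟩
    have hAW : chainMu c hne (symmDiff A W) ≤ ε / 5 + ε / 5 := by
      have hsub : symmDiff A W ⊆ (V \ W) ∪ (V \ A) := by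
        rintro x (⟨hx1, hx2⟩ | ⟨hx1, hx2⟩)
        · exact Or.inl ⟨hcov hx1, hx2⟩
        · exact Or.inr ⟨hWV hx1, hx2⟩
      calc chainMu c hne (symmDiff A W) ≤ chainMu c hne ((V \ W) ∪ (V \ A)) :=
            measure_mono hsub
      _ ≤ chainMu c hne (V \ W) + chainMu c hne (V \ A) := measure_union_le _ _
      _ ≤ ε / 5 + ε / 5 := add_le_add hVW hVA
    -- approximate W from a single chain element
    obtain ⟨f, hf, _, hkf⟩ := chain_finUB hc u hu hne.choose_spec N
    have hWf : MeasurableSet[f.sa] W :=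
      MeasurableSet.biUnion (Finset.range N).countable_toSet
        fun k hk => (hkf k (Finset.mem_range.1 hk).le).1 _ (hC k)
    obtain ⟨B, hB, hfB⟩ := f.dense W hWf (ε / 5) hε5
    have hgBf : MeasurableSet[f.sa] (g ⁻¹' B) := f.comap_le _ ⟨B, hB, rfl⟩
    have hWBm : MeasurableSet[f.sa] (symmDiff W (g ⁻¹' B)) := hWf.symmDiff hgBf
    have hWB : chainMu c hne (symmDiff W (g ⁻¹' B)) < ε / 5 := by
      rw [chainMu_eq hc hne hf hWBm]; exact hfB
    refine ⟨B, hB, ?_⟩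
    have htri : chainMu c hne (symmDiff A (g ⁻¹' B)) ≤
        chainMu c hne (symmDiff A W) + chainMu c hne (symmDiff W (g ⁻¹' B)) := by
      refine le_trans (measure_mono (symmDiff_triangle A W (g ⁻¹' B))) ?_
      exact measure_union_le _ _
    have hfin : ε / 5 + ε / 5 ≠ ⊤ := ENNReal.add_ne_top.2 ⟨hε5top, hε5top⟩
    calc chainMu c hne (symmDiff A (g ⁻¹' B))
        ≤ chainMu c hne (symmDiff A W) + chainMu c hne (symmDiff W (g ⁻¹' B)) := htri
      _ ≤ (ε / 5 + ε / 5) + chainMu c hne (symmDiff W (g ⁻¹' B)) :=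
          add_le_add_left hAW _
      _ < (ε / 5 + ε / 5) + ε / 5 := ENNReal.add_lt_add_left hfin hWB
      _ ≤ ε := by
          calc ε / 5 + ε / 5 + ε / 5 ≤ ε / 5 * 5 := by
                rw [show (5 : ℝ≥0∞) = 3 + 2 by norm_num, mul_add, mul_comm]
                refine le_trans ?_ le_self_add
                rw [show (3 : ℝ≥0∞) = 1 + 1 + 1 by norm_num, add_mul, add_mul,
                  one_mul]
          _ = ε := ENNReal.div_mul_cancel (by norm_num) (by norm_num)
  sand := by
    intro A hA ε hε
    rcases eq_or_ne ε ⊤ with rfl | hεtop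
    · refine ⟨∅, ∅, isCompact_empty,
        (@MeasurableSet.empty K (chainOM c hne).caratheodory),
        subset_rfl, empty_subset _, ?_⟩
      simp
    have hε3 : (0 : ℝ≥0∞) < ε / 3 := ENNReal.div_pos hε.ne' (by norm_num)
    have hε3top : ε / 3 ≠ ⊤ := by simp [ENNReal.div_eq_top, hεtop]
    obtain ⟨u, C, hu, hC, hcov, hsum⟩ := chain_approx hc hne hA.compl hε3
    set V : Set K := ⋃ n, C n with hV
    set D : Set K := ⋂ n, (C n)ᶜ with hD
    have hCm : ∀ n, MeasurableSet[(chainOM c hne).caratheodory] (C n) :=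
      fun n => chain_carath hc hne (hu n) (hC n)
    have hVle : chainMu c hne V ≤ chainMu c hne Aᶜ + ε / 3 :=
      le_trans (measure_iUnion_le _) hsum
    have hDA : D ⊆ A := by
      intro x hx
      by_contra hxA
      obtain ⟨n, hn⟩ := mem_iUnion.1 (hcov hxA)
      exact mem_iInter.1 hx n hn
    have hAD : chainMu c hne (A \ D) ≤ ε / 3 := by
      have heq : A \ D = V \ Aᶜ := by
        ext x
        simp only [hD, hV, mem_diff, mem_iInter, mem_compl_iff, mem_iUnion, not_forall,
          not_not]
        tauto
      rw [heq, measure_diff hcov (MeasurableSet.nullMeasurableSet hA.compl)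
        (chainMu_ne_top hne _)]
      exact tsub_le_iff_right.2 (by rw [add_comm]; exact hVle)
    -- sandwich each complement
    obtain ⟨δ, hδpos, hδsum⟩ := ENNReal.exists_pos_sum_of_countable' hε3.ne' ℕ
    have h3 : ∀ n, ∃ F A', IsCompact F ∧ MeasurableSet[(u n).sa] A' ∧ A' ⊆ F ∧
        F ⊆ (C n)ᶜ ∧ (u n).mu ((C n)ᶜ) ≤ (u n).mu A' + δ n :=
      fun n => (u n).sand ((C n)ᶜ) (hC n).compl (δ n) (hδpos n)
    choose F' A' hF'c hA'm hA'F hF'C hsand' using h3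
    set F : Set K := ⋂ n, F' n with hF
    have hFco : IsCompact F :=
      (hF'c 0).of_isClosed_subset (isClosed_iInter fun n => (hF'c n).isClosed)
        (iInter_subset _ 0)
    have hFD : F ⊆ D := iInter_mono fun n => hF'C n
    set A'' : Set K := ⋂ n, A' n with hA''
    have hA''m : MeasurableSet[(chainOM c hne).caratheodory] A'' :=
      MeasurableSet.iInter fun n => chain_carath hc hne (hu n) (hA'm n)
    have hA''F : A'' ⊆ F := iInter_mono fun n => hA'F n
    have hDval : chainMu c hne (D \ A'') ≤ ε / 3 := by
      have hsub : D \ A'' ⊆ ⋃ n, ((C n)ᶜ \ A' n) := by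
        rintro x ⟨hxD, hxA⟩
        obtain ⟨n, hn⟩ : ∃ n, x ∉ A' n := by
          by_contra hcon
          push_neg at hcon
          exact hxA (mem_iInter.2 hcon)
        exact mem_iUnion.2 ⟨n, mem_iInter.1 hxD n, hn⟩
      have hterm : ∀ n, chainMu c hne ((C n)ᶜ \ A' n) ≤ δ n := by
        intro n
        rw [chainMu_eq hc hne (hu n) ((hC n).compl.diff (hA'm n))]
        rw [measure_diff ((hA'F n).trans (hF'C n))
          (MeasurableSet.nullMeasurableSet (hA'm n)) ((u n).mu_ne_top _)]
        exact tsub_le_iff_right.2 (by rw [add_comm]; exact hsand' n)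
      calc chainMu c hne (D \ A'') ≤ chainMu c hne (⋃ n, ((C n)ᶜ \ A' n)) :=
            measure_mono hsub
      _ ≤ ∑' n, chainMu c hne ((C n)ᶜ \ A' n) := measure_iUnion_le _
      _ ≤ ∑' n, δ n := ENNReal.tsum_le_tsum hterm
      _ ≤ ε / 3 := hδsum.le
    refine ⟨F, A'', hFco, hA''m, hA''F, hFD.trans hDA, ?_⟩
    have hDm : MeasurableSet[(chainOM c hne).caratheodory] D :=
      MeasurableSet.iInter fun n => (hCm n).compl
    calc chainMu c hne A ≤ chainMu c hne (A \ D) + chainMu c hne D := by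
          refine le_trans (measure_mono ?_) (measure_union_le _ _)
          intro x hx
          by_cases hxD : x ∈ D
          · exact Or.inr hxD
          · exact Or.inl ⟨hx, hxD⟩
    _ ≤ ε / 3 + chainMu c hne D := add_le_add_left hAD _
    _ ≤ ε / 3 + (chainMu c hne (D \ A'') + chainMu c hne A'') := by
          refine add_le_add_right ?_ _
          refine le_trans (measure_mono ?_) (measure_union_le _ _)
          intro x hx
          by_cases hxA : x ∈ A''
          · exact Or.inr hxA
          · exact Or.inl ⟨hx, hxA⟩
    _ ≤ ε / 3 + (ε / 3 + chainMu c hne A'') := by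
          exact add_le_add_right (add_le_add_left hDval _) _
    _ = chainMu c hne A'' + (ε / 3 + ε / 3) := by ring
    _ ≤ chainMu c hne A'' + ε := by
          refine add_le_add_right ?_ _
          calc ε / 3 + ε / 3 ≤ ε / 3 * 3 := by
                rw [show (3 : ℝ≥0∞) = 2 + 1 by norm_num, mul_add, mul_one, mul_comm]
                refine le_trans ?_ le_self_add
                rw [show (2 : ℝ≥0∞) = 1 + 1 by norm_num, add_mul, one_mul]
          _ = ε := ENNReal.div_mul_cancel (by norm_num) (by norm_num)

theorem le_chainUB {c : Set (Elem g ν)} (hc : IsChain Elem.le c) (hne : c.Nonempty)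
    {e : Elem g ν} (he : e ∈ c) : e.le (chainUB c hc hne) :=
  ⟨fun s hs => chain_carath hc hne he hs, fun A hA => chainMu_eq hc hne he hA⟩

end Chain

section Extend

variable [IsProbabilityMeasure ν]

/-- Measurable hulls exist. -/
theorem exists_hull (e : Elem g ν) (F₀ : Set K) :
    ∃ H, MeasurableSet[e.sa] H ∧ F₀ ⊆ H ∧
      ∀ C, MeasurableSet[e.sa] C → F₀ ⊆ C → e.mu (H \ C) = 0 := by
  classical
  set I : ℝ≥0∞ := sInf {r | ∃ C, MeasurableSet[e.sa] C ∧ F₀ ⊆ C ∧ r = e.mu C} with hI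
  have hIle : I ≤ 1 := le_trans (sInf_le ⟨univ, @MeasurableSet.univ K e.sa, subset_univ _,
    e.mu_univ.symm⟩) le_rfl
  have hstep : ∀ n : ℕ, ∃ C, MeasurableSet[e.sa] C ∧ F₀ ⊆ C ∧
      e.mu C ≤ I + (↑(n + 1))⁻¹ := by
    intro n
    have hpos : (0 : ℝ≥0∞) < (↑(n + 1))⁻¹ := by
      simp [ENNReal.inv_pos]
    have hlt : I < I + (↑(n + 1))⁻¹ :=
      ENNReal.lt_add_right (ne_top_of_le_ne_top ENNReal.one_ne_top hIle) hpos.ne'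
    obtain ⟨r, ⟨C, hC, hFC, rfl⟩, hrlt⟩ := sInf_lt_iff.1 hlt
    exact ⟨C, hC, hFC, hrlt.le⟩
  choose Cs hCs hFCs hmuCs using hstep
  refine ⟨⋂ n, Cs n, MeasurableSet.iInter fun n => hCs n,
    subset_iInter fun n => hFCs n, ?_⟩
  have hHle : e.mu (⋂ n, Cs n) ≤ I := by
    refine ENNReal.le_of_forall_pos_le_add fun δ hδ _ => ?_
    obtain ⟨n, hn⟩ := ENNReal.exists_inv_nat_lt (a := (δ : ℝ≥0∞)) (by
      exact_mod_cast hδ.ne')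
    have hn' : ((↑(n + 1) : ℝ≥0∞))⁻¹ ≤ (↑δ : ℝ≥0∞) := by
      refine le_trans ?_ hn.le
      refine ENNReal.inv_le_inv.2 ?_
      exact_mod_cast Nat.le_succ n
    calc e.mu (⋂ m, Cs m) ≤ e.mu (Cs n) := measure_mono (iInter_subset _ n)
    _ ≤ I + (↑(n + 1))⁻¹ := hmuCs n
    _ ≤ I + δ := add_le_add_right hn' _
  intro C hC hFC
  have hmeasH : MeasurableSet[e.sa] (⋂ n, Cs n) := MeasurableSet.iInter fun n => hCs n
  have hIH : I ≤ e.mu ((⋂ n, Cs n) ∩ C) :=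
    sInf_le ⟨_, hmeasH.inter hC, subset_inter (subset_iInter fun n => hFCs n) hFC, rfl⟩
  have hsplit : e.mu ((⋂ n, Cs n) ∩ C) + e.mu ((⋂ n, Cs n) \ C) = e.mu (⋂ n, Cs n) :=
    measure_inter_add_diff _ hC
  have : e.mu ((⋂ n, Cs n) ∩ C) + e.mu ((⋂ n, Cs n) \ C) ≤ e.mu ((⋂ n, Cs n) ∩ C) + 0 := by
    rw [hsplit, add_zero]
    exact le_trans hHle hIH
  have hfin : e.mu ((⋂ n, Cs n) ∩ C) ≠ ⊤ := e.mu_ne_top _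
  exact le_antisymm (by exact (ENNReal.add_le_add_iff_left hfin).1 this) zero_le

/-- The one-set extension σ-algebra. -/
def extendSa (e : Elem g ν) (F₀ : Set K) : MeasurableSpace K where
  MeasurableSet' S := ∃ A A', MeasurableSet[e.sa] A ∧ MeasurableSet[e.sa] A' ∧
    S = (A ∩ F₀) ∪ (A' \ F₀)
  measurableSet_empty := ⟨∅, ∅, @MeasurableSet.empty K e.sa, @MeasurableSet.empty K e.sa,
    by simp⟩
  measurableSet_compl := by
    rintro S ⟨A, A', hA, hA', rfl⟩
    refine ⟨Aᶜ, A'ᶜ, hA.compl, hA'.compl, ?_⟩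
    ext x
    by_cases hxF : x ∈ F₀ <;> simp [hxF]
  measurableSet_iUnion := by
    intro f hf
    choose Aa Ab hAa hAb hrep using hf
    refine ⟨⋃ n, Aa n, ⋃ n, Ab n, MeasurableSet.iUnion hAa, MeasurableSet.iUnion hAb, ?_⟩
    simp only [iUnion_inter, iUnion_diff] at *
    rw [← iUnion_union_distrib]
    exact iUnion_congr hrep

theorem extendSa_def {e : Elem g ν} {F₀ S : Set K} :
    MeasurableSet[extendSa e F₀] S ↔ ∃ A A', MeasurableSet[e.sa] A ∧
      MeasurableSet[e.sa] A' ∧ S = (A ∩ F₀) ∪ (A' \ F₀) := Iff.rfl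

/-- One-step extension: any compact set can be adjoined to a partial solution. -/
theorem exists_extension (e : Elem g ν) {F₀ : Set K} (hF₀ : IsCompact F₀) :
    ∃ e' : Elem g ν, e.le e' ∧ MeasurableSet[e'.sa] F₀ := by
  classical
  obtain ⟨H, hH, hFH, hHmin⟩ := exists_hull e F₀
  -- well-definedness core: sets agreeing inside F₀ have a.e. equal intersections with H
  have key : ∀ {A B : Set K}, MeasurableSet[e.sa] A → MeasurableSet[e.sa] B →
      A ∩ F₀ = B ∩ F₀ → e.mu (A ∩ H) = e.mu (B ∩ H) := by
    have key1 : ∀ {A B : Set K}, MeasurableSet[e.sa] A → MeasurableSet[e.sa] B →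
        A ∩ F₀ = B ∩ F₀ → e.mu (A ∩ H) ≤ e.mu (B ∩ H) := by
      intro A B hA hB hAB
      have hsubF : F₀ ⊆ (symmDiff A B)ᶜ := by
        intro x hx hmem
        rw [Set.mem_symmDiff] at hmem
        have h1 : x ∈ A ↔ x ∈ B := by
          constructor
          · intro h
            have hx' : x ∈ A ∩ F₀ := ⟨h, hx⟩
            rw [hAB] at hx'; exact hx'.1
          · intro h
            have hx' : x ∈ B ∩ F₀ := ⟨h, hx⟩
            rw [← hAB] at hx'; exact hx'.1
        tauto
      have hnull : e.mu (H ∩ symmDiff A B) = 0 := by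
        have := hHmin _ ((hA.symmDiff hB).compl) hsubF
        rwa [Set.diff_compl] at this
      have hcover : A ∩ H ⊆ (B ∩ H) ∪ (H ∩ symmDiff A B) := by
        rintro x ⟨hxA, hxH⟩
        by_cases hxB : x ∈ B
        · exact Or.inl ⟨hxB, hxH⟩
        · exact Or.inr ⟨hxH, Set.mem_symmDiff.2 (Or.inl ⟨hxA, hxB⟩)⟩
      calc e.mu (A ∩ H) ≤ e.mu ((B ∩ H) ∪ (H ∩ symmDiff A B)) := measure_mono hcover
      _ ≤ e.mu (B ∩ H) + e.mu (H ∩ symmDiff A B) := measure_union_le _ _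
      _ = e.mu (B ∩ H) := by rw [hnull, add_zero]
    intro A B hA hB hAB
    exact le_antisymm (key1 hA hB hAB) (key1 hB hA hAB.symm)
  -- extraction of representations
  have extract1 : ∀ {A A' B B' : Set K},
      (A ∩ F₀) ∪ (A' \ F₀) = (B ∩ F₀) ∪ (B' \ F₀) → A ∩ F₀ = B ∩ F₀ := by
    intro A A' B B' h
    ext x
    constructor <;> intro hx
    · have hx' : x ∈ (B ∩ F₀) ∪ (B' \ F₀) := h ▸ (Or.inl hx)
      rcases hx' with hx' | hx'
      · exact hx'
      · exact absurd hx.2 hx'.2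
    · have hx' : x ∈ (A ∩ F₀) ∪ (A' \ F₀) := h.symm ▸ (Or.inl hx)
      rcases hx' with hx' | hx'
      · exact hx'
      · exact absurd hx.2 hx'.2
  have extract2 : ∀ {A A' B B' : Set K},
      (A ∩ F₀) ∪ (A' \ F₀) = (B ∩ F₀) ∪ (B' \ F₀) → A' \ H = B' \ H := by
    intro A A' B B' h
    have h2 : A' \ F₀ = B' \ F₀ := by
      ext x
      constructor <;> intro hx
      · have hx' : x ∈ (B ∩ F₀) ∪ (B' \ F₀) := h ▸ (Or.inr hx)
        rcases hx' with hx' | hx'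
        · exact absurd hx'.2 hx.2
        · exact hx'
      · have hx' : x ∈ (A ∩ F₀) ∪ (A' \ F₀) := h.symm ▸ (Or.inr hx)
        rcases hx' with hx' | hx'
        · exact absurd hx'.2 hx.2
        · exact hx'
    ext x
    constructor <;> intro hx
    · have hxF : x ∉ F₀ := fun hxF => hx.2 (hFH hxF)
      have : x ∈ B' \ F₀ := h2 ▸ (⟨hx.1, hxF⟩ : x ∈ A' \ F₀)
      exact ⟨this.1, hx.2⟩
    · have hxF : x ∉ F₀ := fun hxF => hx.2 (hFH hxF)
      have : x ∈ A' \ F₀ := h2.symm ▸ (⟨hx.1, hxF⟩ : x ∈ B' \ F₀)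
      exact ⟨this.1, hx.2⟩
  -- the value function
  set v : ∀ S : Set K, MeasurableSet[extendSa e F₀] S → ℝ≥0∞ := fun S hS =>
    e.mu (hS.choose ∩ H) + e.mu (hS.choose_spec.choose \ H) with hv
  have vval : ∀ {S A A' : Set K} (hS : MeasurableSet[extendSa e F₀] S),
      MeasurableSet[e.sa] A → MeasurableSet[e.sa] A' → S = (A ∩ F₀) ∪ (A' \ F₀) →
      v S hS = e.mu (A ∩ H) + e.mu (A' \ H) := by
    intro S A A' hS hA hA' hrep
    obtain ⟨hA0, hA0', hrep0⟩ := hS.choose_spec.choose_spec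
    have heq : (hS.choose ∩ F₀) ∪ (hS.choose_spec.choose \ F₀) = (A ∩ F₀) ∪ (A' \ F₀) :=
      hrep0.symm.trans hrep
    rw [hv]
    dsimp only
    rw [key hA0 hA (extract1 heq), extract2 heq]
  have v0 : v ∅ (@MeasurableSet.empty K (extendSa e F₀)) = 0 := by
    rw [vval _ (@MeasurableSet.empty K e.sa) (@MeasurableSet.empty K e.sa) (by simp)]
    simp
  have vU : ∀ ⦃f : ℕ → Set K⦄ (h : ∀ i, MeasurableSet[extendSa e F₀] (f i)),
      Pairwise (Function.onFun Disjoint f) →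
      v (⋃ i, f i) (MeasurableSet.iUnion h) = ∑' i, v (f i) (h i) := by
    intro f h hd
    choose Aa Ab hAa hAb hrep using fun i => h i
    have hU : (⋃ i, f i) = ((⋃ i, Aa i) ∩ F₀) ∪ ((⋃ i, Ab i) \ F₀) := by
      rw [iUnion_inter, iUnion_diff, ← iUnion_union_distrib]
      exact iUnion_congr hrep
    rw [vval _ (MeasurableSet.iUnion hAa) (MeasurableSet.iUnion hAb) hU]
    have hAanull : ∀ {n m : ℕ}, n ≠ m → e.mu ((Aa n ∩ H) ∩ (Aa m ∩ H)) = 0 := by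
      intro n m hnm
      have hsubF : F₀ ⊆ (Aa n ∩ Aa m)ᶜ := by
        intro x hxF hmem
        have hn : x ∈ f n := by rw [hrep n]; exact Or.inl ⟨hmem.1, hxF⟩
        have hm : x ∈ f m := by rw [hrep m]; exact Or.inl ⟨hmem.2, hxF⟩
        exact (hd hnm).le_bot ⟨hn, hm⟩
      have hnull := hHmin _ (((hAa n).inter (hAa m)).compl) hsubF
      rw [Set.diff_compl] at hnull
      refine measure_mono_null ?_ hnull
      rintro x ⟨⟨hx1, hxH⟩, ⟨hx2, _⟩⟩
      exact ⟨hxH, hx1, hx2⟩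
    have hmu1 : e.mu ((⋃ i, Aa i) ∩ H) = ∑' i, e.mu (Aa i ∩ H) := by
      rw [iUnion_inter]
      refine measure_iUnion₀ ?_ (fun i => ((hAa i).inter hH).nullMeasurableSet)
      intro n m hnm
      exact hAanull hnm
    have hmu2 : e.mu ((⋃ i, Ab i) \ H) = ∑' i, e.mu (Ab i \ H) := by
      rw [iUnion_diff]
      refine measure_iUnion₀ ?_ (fun i => ((hAb i).diff hH).nullMeasurableSet)
      intro n m hnm
      refine measure_mono_null ?_ measure_empty
      rintro x ⟨⟨hx1, hxH⟩, ⟨hx2, _⟩⟩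
      have hxF : x ∉ F₀ := fun hxF => hxH (hFH hxF)
      have hn : x ∈ f n := by rw [hrep n]; exact Or.inr ⟨hx1, hxF⟩
      have hm : x ∈ f m := by rw [hrep m]; exact Or.inr ⟨hx2, hxF⟩
      exact (hd hnm).le_bot ⟨hn, hm⟩
    rw [hmu1, hmu2, ← ENNReal.tsum_add]
    exact (tsum_congr fun i => (vval (h i) (hAa i) (hAb i) (hrep i)).symm)
  -- the extended measure
  set mu' := @Measure.ofMeasurable K (extendSa e F₀) v v0 vU with hmu'
  have mu'_apply : ∀ {S : Set K} (hS : MeasurableSet[extendSa e F₀] S),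
      mu' S = v S hS := by
    intro S hS
    exact @Measure.ofMeasurable_apply K (extendSa e F₀) v v0 vU S hS
  have hsub : e.sa ≤ extendSa e F₀ :=
    fun S hS => ⟨S, S, hS, hS, (inter_union_diff S F₀).symm⟩
  have mu'_eq : ∀ {S : Set K}, MeasurableSet[e.sa] S → mu' S = e.mu S := by
    intro S hS
    rw [mu'_apply (hsub _ hS), vval _ hS hS (inter_union_diff S F₀).symm,
      measure_inter_add_diff S hH]
  have hF₀meas : MeasurableSet[extendSa e F₀] F₀ :=
    ⟨univ, ∅, @MeasurableSet.univ K e.sa, @MeasurableSet.empty K e.sa, by simp⟩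
  have hnullHF : mu' (H \ F₀) = 0 := by
    have hrep : H \ F₀ = (∅ ∩ F₀) ∪ (H \ F₀) := by simp
    have hmeas : MeasurableSet[extendSa e F₀] (H \ F₀) :=
      ⟨∅, H, @MeasurableSet.empty K e.sa, hH, hrep⟩
    rw [mu'_apply hmeas, vval hmeas (@MeasurableSet.empty K e.sa) hH hrep]
    simp
  refine ⟨⟨extendSa e F₀, mu', fun s hs => hsub _ (e.comap_le _ hs), ?_, ?_, ?_⟩,
    ⟨hsub, fun A hA => mu'_eq hA⟩, hF₀meas⟩
  · -- lift
    intro B hB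
    rw [mu'_eq (e.comap_le _ ⟨B, hB, rfl⟩)]
    exact e.lift B hB
  · -- dense
    intro S hS ε hε
    obtain ⟨A, A', hA, hA', hrep⟩ := hS
    set T : Set K := (A ∩ H) ∪ (A' \ H) with hT
    have hTmeas : MeasurableSet[e.sa] T := (hA.inter hH).union (hA'.diff hH)
    have hST : symmDiff S T ⊆ H \ F₀ := by
      intro x hx
      rw [Set.mem_symmDiff] at hx
      by_cases hxH : x ∈ H
      · by_cases hxF : x ∈ F₀
        · exfalso
          have hS' : x ∈ S ↔ x ∈ A := by
            rw [hrep]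
            simp [hxF]
          have hT' : x ∈ T ↔ x ∈ A := by
            rw [hT]
            simp [hxH]
          tauto
        · exact ⟨hxH, hxF⟩
      · exfalso
        have hxF : x ∉ F₀ := fun hxF => hxH (hFH hxF)
        have hS' : x ∈ S ↔ x ∈ A' := by
          rw [hrep]; simp [hxF]
        have hT' : x ∈ T ↔ x ∈ A' := by
          rw [hT]; simp [hxH]
        tauto
    have hSTnull : mu' (symmDiff S T) = 0 := measure_mono_null hST hnullHF
    obtain ⟨B, hB, hlt⟩ := e.dense T hTmeas ε hε
    refine ⟨B, hB, ?_⟩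
    have hgB : MeasurableSet[e.sa] (g ⁻¹' B) := e.comap_le _ ⟨B, hB, rfl⟩
    calc mu' (symmDiff S (g ⁻¹' B))
        ≤ mu' (symmDiff S T ∪ symmDiff T (g ⁻¹' B)) :=
          measure_mono (symmDiff_triangle S T (g ⁻¹' B))
      _ ≤ mu' (symmDiff S T) + mu' (symmDiff T (g ⁻¹' B)) := measure_union_le _ _
      _ = e.mu (symmDiff T (g ⁻¹' B)) := by
          rw [hSTnull, zero_add, mu'_eq (hTmeas.symmDiff hgB)]
      _ < ε := hlt
  · -- sand
    intro S hS ε hε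
    obtain ⟨A, A', hA, hA', hrep⟩ := hS
    have hε2 : (0 : ℝ≥0∞) < ε / 2 := ENNReal.div_pos hε.ne' (by norm_num)
    obtain ⟨F₁, A₁, hF₁c, hA₁m, hA₁F, hF₁sub, hs1⟩ :=
      e.sand (A ∩ H) (hA.inter hH) (ε / 2) hε2
    obtain ⟨F₂, A₂, hF₂c, hA₂m, hA₂F, hF₂sub, hs2⟩ :=
      e.sand (A' \ H) (hA'.diff hH) (ε / 2) hε2
    have hS' : MeasurableSet[extendSa e F₀] S := ⟨A, A', hA, hA', hrep⟩
    have hA₂F₀ : A₂ ∩ F₀ = ∅ := by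
      rw [eq_empty_iff_forall_notMem]
      rintro x ⟨hx1, hx2⟩
      exact ((hA₂F.trans hF₂sub) hx1).2 (hFH hx2)
    have hA₂d : A₂ \ F₀ = A₂ := by
      ext x
      refine ⟨fun hx => hx.1, fun hx => ⟨hx, fun hxF => ?_⟩⟩
      rw [eq_empty_iff_forall_notMem] at hA₂F₀
      exact hA₂F₀ x ⟨hx, hxF⟩
    have hA''rep : (A₁ ∩ F₀) ∪ A₂ = ((A₁ ∩ F₀) ∪ (A₂ \ F₀)) := by rw [hA₂d]
    have hA''meas : MeasurableSet[extendSa e F₀] ((A₁ ∩ F₀) ∪ A₂) := by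
      rw [hA''rep]
      exact ⟨A₁, A₂, hA₁m, hA₂m, rfl⟩
    refine ⟨(F₁ ∩ F₀) ∪ F₂, (A₁ ∩ F₀) ∪ A₂, (hF₁c.inter_right hF₀.isClosed).union hF₂c,
      hA''meas, ?_, ?_, ?_⟩
    · exact union_subset_union (inter_subset_inter_left _ hA₁F) hA₂F
    · -- (F₁ ∩ F₀) ∪ F₂ ⊆ S
      rw [hrep]
      refine union_subset ?_ ?_
      · intro x ⟨hx1, hx2⟩
        exact Or.inl ⟨(hF₁sub hx1).1, hx2⟩
      · intro x hx
        have hx' := hF₂sub hx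
        exact Or.inr ⟨hx'.1, fun hxF => hx'.2 (hFH hxF)⟩
    · -- measure estimate
      have hA₁H : A₁ ∩ H = A₁ :=
        inter_eq_left.2 (fun x hx => (hF₁sub (hA₁F hx)).2)
      have hA₂H : A₂ \ H = A₂ := by
        ext x
        exact ⟨fun hx => hx.1, fun hx => ⟨hx, (hF₂sub (hA₂F hx)).2⟩⟩
      have hval : mu' ((A₁ ∩ F₀) ∪ A₂) = e.mu A₁ + e.mu A₂ := by
        rw [mu'_apply hA''meas, vval hA''meas hA₁m hA₂m hA''rep, hA₁H, hA₂H]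
      have hvalS : mu' S = e.mu (A ∩ H) + e.mu (A' \ H) := by
        rw [mu'_apply hS', vval hS' hA hA' hrep]
      rw [hval, hvalS]
      calc e.mu (A ∩ H) + e.mu (A' \ H)
          ≤ (e.mu A₁ + ε / 2) + (e.mu A₂ + ε / 2) := add_le_add hs1 hs2
        _ = (e.mu A₁ + e.mu A₂) + (ε / 2 + ε / 2) := by ring
        _ = e.mu A₁ + e.mu A₂ + ε := by rw [ENNReal.add_halves]

end Extend

section Final

variable [IsProbabilityMeasure ν] [ν.Regular]

/-- A maximal partial solution measures every Borel set. -/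
theorem exists_maximal_elem (hgc : Continuous g) (hg : Function.Surjective g) :
    ∃ m : Elem g ν, ‹MeasurableSpace K› ≤ m.sa := by
  classical
  have hbase : Nonempty (Elem g ν) := ⟨baseElem hgc hg ν⟩
  obtain ⟨m, hm⟩ := exists_maximal_of_chains_bounded
    (r := Elem.le (g := g) (ν := ν))
    (fun c hc => by
      rcases c.eq_empty_or_nonempty with rfl | hne
      · exact ⟨baseElem hgc hg ν, fun a ha => absurd ha (notMem_empty a)⟩
      · exact ⟨chainUB c hc hne, fun a ha => le_chainUB hc hne ha⟩)
    (fun {a b c} hab hbc => Elem.le_comp hab hbc)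
  refine ⟨m, ?_⟩
  have hcompact : ∀ F₀ : Set K, IsCompact F₀ → MeasurableSet[m.sa] F₀ := by
    intro F₀ hF₀
    obtain ⟨e', hle, hmeas⟩ := exists_extension m hF₀
    exact (hm e' hle).1 _ hmeas
  rw [BorelSpace.measurable_eq (α := K), borel]
  refine MeasurableSpace.generateFrom_le ?_
  intro U hU
  have hUc : MeasurableSet[m.sa] Uᶜ :=
    hcompact Uᶜ hU.isClosed_compl.isCompact
  simpa using hUc.compl

end Final

end Stmt10Aux

open Stmt10Aux in
/-- For a continuous surjection `g : K → L` of compact Hausdorff spaces and any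
regular Borel probability measure `ν` on `L`, there is a regular Borel probability
measure `μ` on `K` with `g[μ] = ν` such that `{g⁻¹(B) : B ∈ Bor(L)}` is `Δ`-dense
in `Bor(K)` with respect to `μ`. -/
theorem stmt10 {K L : Type*}
    [TopologicalSpace K] [CompactSpace K] [T2Space K] [MeasurableSpace K] [BorelSpace K]
    [TopologicalSpace L] [CompactSpace L] [T2Space L] [MeasurableSpace L] [BorelSpace L]
    (g : C(K, L)) (hg : Function.Surjective g)
    (ν : Measure L) [IsProbabilityMeasure ν] [ν.Regular] :
    ∃ μ : Measure K, IsProbabilityMeasure μ ∧ μ.Regular ∧ μ.map g = ν ∧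
      ∀ ε : ENNReal, 0 < ε → ∀ A : Set K, MeasurableSet A →
        ∃ B : Set L, MeasurableSet B ∧ μ (symmDiff A ((⇑g) ⁻¹' B)) < ε := by
  classical
  obtain ⟨m, hBor⟩ := exists_maximal_elem (g := ⇑g) (ν := ν) g.continuous hg
  set μF : Measure K := m.mu.trim hBor with hμF
  have trim_eq : ∀ {A : Set K}, MeasurableSet A → μF A = m.mu A :=
    fun hA => trim_measurableSet_eq hBor hA
  have hgm : Measurable (⇑g) := g.continuous.measurable
  have hprob : IsProbabilityMeasure μF := by
    constructor
    rw [trim_eq MeasurableSet.univ, m.mu_univ]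
  have hmap : μF.map g = ν := by
    refine Measure.ext fun B hB => ?_
    rw [Measure.map_apply hgm hB, trim_eq (hgm hB), m.lift B hB]
  have hdense : ∀ ε : ENNReal, 0 < ε → ∀ A : Set K, MeasurableSet A →
      ∃ B : Set L, MeasurableSet B ∧ μF (symmDiff A ((⇑g) ⁻¹' B)) < ε := by
    intro ε hε A hA
    obtain ⟨B, hB, hlt⟩ := m.dense A (hBor _ hA) ε hε
    refine ⟨B, hB, ?_⟩
    rw [trim_eq (hA.symmDiff (hgm hB))]
    exact hlt
  -- regularity
  have hfc : IsFiniteMeasureOnCompacts μF := by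
    constructor
    intro F hF
    exact lt_of_le_of_lt (measure_mono (subset_univ F))
      (by rw [hprob.measure_univ]; exact ENNReal.one_lt_top)
  have houter : μF.OuterRegular := by
    constructor
    intro A hA r hr
    rcases eq_or_ne r ⊤ with rfl | hrtop
    · refine ⟨univ, subset_univ _, isOpen_univ, ?_⟩
      rw [hprob.measure_univ]
      exact ENNReal.one_lt_top
    obtain ⟨ε', hε'pos, hlt⟩ := ENNReal.lt_iff_exists_add_pos_lt.1 hr
    obtain ⟨F, A', hFc, hA'm, hA'F, hFA, hsand⟩ :=
      m.sand Aᶜ (hBor _ hA.compl) ε' (by exact_mod_cast hε'pos)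
    refine ⟨Fᶜ, ?_, hFc.isClosed.isOpen_compl, ?_⟩
    · intro x hx
      exact fun hxF => (hFA hxF) hx
    · have hsub : Fᶜ ⊆ A ∪ (Aᶜ \ A') := by
        intro x hx
        by_cases hxA : x ∈ A
        · exact Or.inl hxA
        · exact Or.inr ⟨hxA, fun hxA' => hx (hA'F hxA')⟩
      have hdiff : m.mu (Aᶜ \ A') ≤ ε' := by
        rw [measure_diff (hA'F.trans hFA) (MeasurableSet.nullMeasurableSet hA'm)
          (m.mu_ne_top _)]
        exact tsub_le_iff_right.2 (by rw [add_comm]; exact hsand)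
      calc μF Fᶜ = m.mu Fᶜ := trim_eq hFc.isClosed.measurableSet.compl
      _ ≤ m.mu A + m.mu (Aᶜ \ A') :=
          le_trans (measure_mono hsub) (measure_union_le _ _)
      _ ≤ m.mu A + ε' := add_le_add_right hdiff _
      _ = μF A + ε' := by rw [trim_eq hA]
      _ < r := hlt
  have hinner : μF.InnerRegularWRT IsCompact IsOpen := by
    intro U hU r hr
    obtain ⟨ε', hε'pos, hlt⟩ := ENNReal.lt_iff_exists_add_pos_lt.1 hr
    obtain ⟨F, A', hFc, hA'm, hA'F, hFA, hsand⟩ :=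
      m.sand U (hBor _ hU.measurableSet) ε' (by exact_mod_cast hε'pos)
    refine ⟨F, hFA, hFc, ?_⟩
    have h1 : r + ε' < m.mu A' + ε' := by
      calc r + ↑ε' < μF U := hlt
      _ = m.mu U := trim_eq hU.measurableSet
      _ ≤ m.mu A' + ε' := hsand
    have h2 : r < m.mu A' := (ENNReal.add_lt_add_iff_right ENNReal.coe_ne_top).1 h1
    calc r < m.mu A' := h2
    _ ≤ m.mu F := measure_mono hA'F
    _ = μF F := (trim_eq hFc.isClosed.measurableSet).symm
  haveI := hfc
  haveI := houter
  exact ⟨μF, hprob, ⟨hinner⟩, hmap, hdense⟩
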